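/- Let X ⊆ ℝⁿ be a nonempty compact convex set, m a positive integer, a(x) = Âx + â ∈ ℝ^m and b(x) = B̂ᵀx + b̂ ∈ ℝ affine maps, ξ⁰ ∈ ℝ^m, and θ ≥ 0. Then the epigraph { (x, t) ∈ ℝⁿ × ℝ : x ∈ X, (ξ⁰)ᵀ a(x) + b(x) − θ ‖a(x)‖₁ ≤ t } is MICP-representable. -/
import Mathlib


/-- A set `S ⊆ E` (think `E = ℝⁿ`) is mixed-integer convex programming representable
(MICP-R) if there exist nonnegative integers `p`, `d` and a closed convex set
`M ⊆ E × ℝᵖ × ℝᵈ` such that `x ∈ S` iff there are `y ∈ ℝᵖ` and `z ∈ ℝᵈ` with all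
coordinates of `z` integral and `(x, y, z) ∈ M`. -/
def IsMICPR {E : Type*} [AddCommGroup E] [Module ℝ E] [TopologicalSpace E]
    (S : Set E) : Prop :=
  ∃ (p d : ℕ) (M : Set (E × (Fin p → ℝ) × (Fin d → ℝ))),
    IsClosed M ∧ Convex ℝ M ∧
      ∀ x : E, x ∈ S ↔ ∃ (y : Fin p → ℝ) (z : Fin d → ℝ),
        (∀ i, ∃ k : ℤ, z i = (k : ℝ)) ∧ (x, y, z) ∈ M

section aux

variable {n : ℕ}

lemma aff_comb (c d : ℝ) (h : c + d = 1) (u v : Fin n → ℝ) (co : Fin n → ℝ) (k : ℝ) :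
    (∑ i, co i * (c • u + d • v) i) + k
      = c * ((∑ i, co i * u i) + k) + d * ((∑ i, co i * v i) + k) := by
  have key : ∀ i, co i * (c • u + d • v) i = c * (co i * u i) + d * (co i * v i) := by
    intro i; simp [mul_add]; ring
  rw [Finset.sum_congr rfl (fun i _ => key i), Finset.sum_add_distrib,
    ← Finset.mul_sum, ← Finset.mul_sum]
  linear_combination (-k) * h

end aux

/-- For a nonempty compact convex `X ⊆ ℝⁿ`, affine maps `a(x) = Âx + â ∈ ℝ^m`,
`b(x) = B̂ᵀx + b̂ ∈ ℝ`, `ξ⁰ ∈ ℝ^m`, and `θ ≥ 0`, the epigraph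
`{(x, t) : x ∈ X, (ξ⁰)ᵀ a(x) + b(x) − θ‖a(x)‖₁ ≤ t}` is MICP-representable. -/
theorem single_piece_reverse_l1_epigraph_micpr {n m : ℕ}
    (X : Set (Fin n → ℝ)) (hne : X.Nonempty) (hcomp : IsCompact X)
    (hconv : Convex ℝ X)
    (A : Matrix (Fin m) (Fin n) ℝ) (ahat : Fin m → ℝ)
    (B : Fin n → ℝ) (bhat : ℝ) (ξ0 : Fin m → ℝ) (θ : ℝ) (hθ : 0 ≤ θ) :
    IsMICPR {xt : (Fin n → ℝ) × ℝ | xt.1 ∈ X ∧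
      (∑ j, ξ0 j * ((∑ i, A j i * xt.1 i) + ahat j)) +
        ((∑ i, B i * xt.1 i) + bhat) -
        θ * (∑ j, |(∑ i, A j i * xt.1 i) + ahat j|) ≤ xt.2} := by
  -- the affine maps
  set a : Fin m → (Fin n → ℝ) → ℝ := fun j x => (∑ i, A j i * x i) + ahat j with ha
  have hacont : ∀ j, Continuous (a j) := by
    intro j
    exact (continuous_finset_sum _ fun i _ => continuous_const.mul (continuous_apply i)).add continuous_const
  -- a bound L on |a j x| over X
  have hfcont : ContinuousOn (fun x => ∑ j, |a j x|) X :=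
    (continuous_finset_sum _ fun j _ => (hacont j).abs).continuousOn
  obtain ⟨xM, hxM, hsup⟩ := hcomp.exists_isMaxOn hne hfcont
  set L : ℝ := ∑ j, |a j xM| with hLdef
  have hL0 : 0 ≤ L := Finset.sum_nonneg fun j _ => abs_nonneg _
  have hL : ∀ x ∈ X, ∀ j, |a j x| ≤ L := by
    intro x hx j
    refine le_trans ?_ (hsup hx)
    exact Finset.single_le_sum (f := fun j' => |a j' x|) (fun j' _ => abs_nonneg _)
      (Finset.mem_univ j)
  refine ⟨m, m, {q : ((Fin n → ℝ) × ℝ) × (Fin m → ℝ) × (Fin m → ℝ) |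
      q.1.1 ∈ X ∧
      (∑ j, ξ0 j * a j q.1.1) + ((∑ i, B i * q.1.1 i) + bhat) ≤ q.1.2 + θ * ∑ j, q.2.1 j ∧
      ∀ j, q.2.1 j ≤ a j q.1.1 + 2 * L * (1 - q.2.2 j) ∧
           q.2.1 j ≤ -(a j q.1.1) + 2 * L * q.2.2 j ∧
           0 ≤ q.2.2 j ∧ q.2.2 j ≤ 1}, ?_, ?_, ?_⟩
  · -- closed
    simp only [Set.setOf_and, Set.setOf_forall]
    have cX : IsClosed {q : ((Fin n → ℝ) × ℝ) × (Fin m → ℝ) × (Fin m → ℝ) | q.1.1 ∈ X} :=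
      hcomp.isClosed.preimage (continuous_fst.fst)
    have ca : ∀ j, Continuous fun q : ((Fin n → ℝ) × ℝ) × (Fin m → ℝ) × (Fin m → ℝ) =>
        a j q.1.1 := fun j => (hacont j).comp continuous_fst.fst
    have cw : ∀ j, Continuous fun q : ((Fin n → ℝ) × ℝ) × (Fin m → ℝ) × (Fin m → ℝ) =>
        q.2.1 j := fun j => (continuous_apply j).comp continuous_snd.fst
    have cz : ∀ j, Continuous fun q : ((Fin n → ℝ) × ℝ) × (Fin m → ℝ) × (Fin m → ℝ) =>
        q.2.2 j := fun j => (continuous_apply j).comp continuous_snd.snd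
    refine cX.inter (IsClosed.inter ?_ (isClosed_iInter fun j => ?_))
    · refine isClosed_le ?_ ?_
      · exact ((continuous_finset_sum _ fun j _ => continuous_const.mul (ca j)).add
          ((continuous_finset_sum _ fun i _ =>
            continuous_const.mul ((continuous_apply i).comp continuous_fst.fst)).add
            continuous_const))
      · exact continuous_fst.snd.add
          (continuous_const.mul (continuous_finset_sum _ fun j _ => cw j))
    · refine IsClosed.inter (isClosed_le (cw j) ?_) (IsClosed.inter (isClosed_le (cw j) ?_)
        (IsClosed.inter (isClosed_le continuous_const (cz j))
          (isClosed_le (cz j) continuous_const)))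
      · exact (ca j).add (continuous_const.mul (continuous_const.sub (cz j)))
      · exact (ca j).neg.add (continuous_const.mul (cz j))
  · -- convex
    rintro ⟨⟨x1, t1⟩, w1, z1⟩ ⟨hX1, hO1, hC1⟩ ⟨⟨x2, t2⟩, w2, z2⟩ ⟨hX2, hO2, hC2⟩ c e hc he hce
    dsimp only at hX1 hO1 hC1 hX2 hO2 hC2
    simp only [Prod.smul_mk, Prod.mk_add_mk, Set.mem_setOf_eq, smul_eq_mul, Pi.add_apply,
      Pi.smul_apply]
    have e1 : ∀ j, a j (c • x1 + e • x2) = c * a j x1 + e * a j x2 := fun j =>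
      aff_comb c e hce x1 x2 (fun i => A j i) (ahat j)
    refine ⟨hconv hX1 hX2 hc he hce, ?_, ?_⟩
    · have e2 : ∑ j, ξ0 j * a j (c • x1 + e • x2)
          = c * ∑ j, ξ0 j * a j x1 + e * ∑ j, ξ0 j * a j x2 := by
        simp only [e1]
        rw [Finset.mul_sum, Finset.mul_sum, ← Finset.sum_add_distrib]
        exact Finset.sum_congr rfl fun j _ => by ring
      have e3 : (∑ i, B i * (c * x1 i + e * x2 i)) + bhat
          = c * ((∑ i, B i * x1 i) + bhat) + e * ((∑ i, B i * x2 i) + bhat) := by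
        have := aff_comb c e hce x1 x2 B bhat
        simpa using this
      have e4 : ∑ j, (c * w1 j + e * w2 j) = c * ∑ j, w1 j + e * ∑ j, w2 j := by
        rw [Finset.mul_sum, Finset.mul_sum, ← Finset.sum_add_distrib]
      have p1 := mul_le_mul_of_nonneg_left hO1 hc
      have p2 := mul_le_mul_of_nonneg_left hO2 he
      have efact : θ * (c * ∑ j, w1 j + e * ∑ j, w2 j)
          = c * (θ * ∑ j, w1 j) + e * (θ * ∑ j, w2 j) := by ring
      rw [e2, e3, e4]
      nlinarith [p1, p2, efact]
    · intro j
      obtain ⟨q1, q2, q3, q4⟩ := hC1 j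
      obtain ⟨r1, r2, r3, r4⟩ := hC2 j
      rw [e1 j]
      refine ⟨?_, ?_, ?_, ?_⟩
      · have hfact : 2 * L * (1 - (c * z1 j + e * z2 j))
            = c * (2 * L * (1 - z1 j)) + e * (2 * L * (1 - z2 j)) := by
          linear_combination (-2 * L) * hce
        have p1 := mul_le_mul_of_nonneg_left q1 hc
        have p2 := mul_le_mul_of_nonneg_left r1 he
        nlinarith [p1, p2, hfact]
      · have hfact : 2 * L * (c * z1 j + e * z2 j)
            = c * (2 * L * z1 j) + e * (2 * L * z2 j) := by ring
        have p1 := mul_le_mul_of_nonneg_left q2 hc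
        have p2 := mul_le_mul_of_nonneg_left r2 he
        nlinarith [p1, p2, hfact]
      · exact add_nonneg (mul_nonneg hc q3) (mul_nonneg he r3)
      · have p1 := mul_le_mul_of_nonneg_left q4 hc
        have p2 := mul_le_mul_of_nonneg_left r4 he
        linarith
  · -- representation
    rintro ⟨x, t⟩
    constructor
    · rintro ⟨hx, hft⟩
      refine ⟨fun j => |a j x|, fun j => if 0 ≤ a j x then 1 else 0, ?_, hx, ?_, ?_⟩
      · intro i
        by_cases h : 0 ≤ a i x
        · exact ⟨1, by simp [h]⟩
        · exact ⟨0, by simp [h]⟩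
      · simp only [Set.mem_setOf_eq] at hft ⊢
        linarith [hft]
      · intro j
        have hb := hL x hx j
        by_cases h : 0 ≤ a j x
        · have : |a j x| = a j x := abs_of_nonneg h
          simp only [h, if_pos]
          refine ⟨by linarith, by rw [this]; linarith [abs_le.mp hb], by norm_num, by norm_num⟩
        · push_neg at h
          have : |a j x| = -(a j x) := abs_of_neg h
          simp only [h, if_neg (not_le.mpr h)]
          refine ⟨by rw [this]; linarith [abs_le.mp hb], by rw [this]; linarith, le_refl _, by norm_num⟩
    · rintro ⟨w, z, hint, hx, hobj, hcons⟩
      dsimp only at hx hobj hcons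
      refine ⟨hx, ?_⟩
      have hw : ∀ j, w j ≤ |a j x| := by
        intro j
        obtain ⟨k, hk⟩ := hint j
        obtain ⟨h1, h2, h3, h4⟩ := hcons j
        rw [hk] at h1 h2 h3 h4
        have hk01 : k = 0 ∨ k = 1 := by
          have h3' : (0:ℤ) ≤ k := by exact_mod_cast h3
          have h4' : k ≤ (1:ℤ) := by exact_mod_cast h4
          omega
        rcases hk01 with h | h
        · subst h
          push_cast at h2
          calc w j ≤ -(a j x) + 2 * L * 0 := by linarith
            _ = -(a j x) := by ring
            _ ≤ |a j x| := neg_le_abs _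
        · subst h
          push_cast at h1
          calc w j ≤ a j x + 2 * L * (1 - 1) := by linarith
            _ = a j x := by ring
            _ ≤ |a j x| := le_abs_self _
      have hsum : ∑ j, w j ≤ ∑ j, |a j x| := Finset.sum_le_sum fun j _ => hw j
      have := mul_le_mul_of_nonneg_left hsum hθ
      linarith
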